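/- arXiv:1608.04006 — 4 statements merged into one kernel-verified Lean document; each statement's English description precedes it below -/
import Mathlib

section
/- For every positive integer n, 15·∑_{k=1}^{n} k^8 = (5(n(n+1))^3 - 10(n(n+1))^2 + 9n(n+1) - 3) · ∑_{k=1}^{n} k^2. -/
lemma sumsq (n : ℕ) : 6 * ∑ k ∈ Finset.Icc 1 n, (k : ℤ) ^ 2 =
    n * (n + 1) * (2 * n + 1) := by
  induction n with
  | zero => simp
  | succ m ih =>
    rw [Finset.sum_Icc_succ_top (by omega), mul_add, ih]
    push_cast; ring

lemma sum8 (n : ℕ) : 90 * ∑ k ∈ Finset.Icc 1 n, (k : ℤ) ^ 8 =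
    10 * n ^ 9 + 45 * n ^ 8 + 60 * n ^ 7 - 42 * n ^ 5 + 20 * n ^ 3 - 3 * n := by
  induction n with
  | zero => simp
  | succ m ih =>
    rw [Finset.sum_Icc_succ_top (by omega), mul_add, ih]
    push_cast; ring

theorem stmt_7 (n : ℕ) (hn : 0 < n) :
    15 * ∑ k ∈ Finset.Icc 1 n, (k : ℤ) ^ 8 =
      (5 * (n * (n + 1)) ^ 3 - 10 * (n * (n + 1)) ^ 2 + 9 * (n * (n + 1)) - 3) *
        ∑ k ∈ Finset.Icc 1 n, (k : ℤ) ^ 2 := by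
  apply mul_left_cancel₀ (show (6 : ℤ) ≠ 0 by norm_num)
  linear_combination sum8 n -
    (5 * ((n : ℤ) * (n + 1)) ^ 3 - 10 * ((n : ℤ) * (n + 1)) ^ 2 + 9 * ((n : ℤ) * (n + 1)) - 3) *
      sumsq n
end

section
/- For every positive integer n, 11·∑_{k=1}^{n} k^{10} = (48·T^4 - 80·T^3 + 68·T^2 - 5·(6T - 1)) · ∑_{k=1}^{n} k^2, where T = n(n+1)/2. -/
lemma sqsum (n : ℕ) : ∑ k ∈ Finset.Icc 1 n, (k : ℚ) ^ 2
    = (n:ℚ) * (n + 1) * (2 * n + 1) / 6 := by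
  induction n with
  | zero => simp
  | succ m ih =>
    rw [Finset.sum_Icc_succ_top (by omega), ih]
    push_cast; ring

lemma aux (n : ℕ) :
    11 * ∑ k ∈ Finset.Icc 1 n, (k : ℚ) ^ 10 =
      (48 * ((n:ℚ) * (n + 1) / 2) ^ 4 - 80 * ((n:ℚ) * (n + 1) / 2) ^ 3 +
        68 * ((n:ℚ) * (n + 1) / 2) ^ 2 - 5 * (6 * ((n:ℚ) * (n + 1) / 2) - 1)) *
        ∑ k ∈ Finset.Icc 1 n, (k : ℚ) ^ 2 := by
  induction n with
  | zero => simp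
  | succ m ih =>
    rw [Finset.sum_Icc_succ_top (by omega), sqsum] at *
    push_cast at *
    linear_combination ih

theorem stmt_11 (n : ℕ) (hn : 0 < n) (T : ℚ) (hT : T = n * (n + 1) / 2) :
    11 * ∑ k ∈ Finset.Icc 1 n, (k : ℚ) ^ 10 =
      (48 * T ^ 4 - 80 * T ^ 3 + 68 * T ^ 2 - 5 * (6 * T - 1)) *
        ∑ k ∈ Finset.Icc 1 n, (k : ℚ) ^ 2 := by
  subst hT; exact aux n
end

section
/- For every positive integer n, 6·∑_{k=1}^{n} k^{11} = (32·T^4 - 64·T^3 + 68·T^2 - 10·(4T - 1)) · ∑_{k=1}^{n} k^3, where T = n(n+1)/2. -/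
lemma sum3 (n : ℕ) :
    ∑ k ∈ Finset.Icc 1 n, (k : ℚ) ^ 3 = ((n : ℚ) * (n + 1) / 2) ^ 2 := by
  induction n with
  | zero => simp
  | succ m ih =>
    rw [Finset.sum_Icc_succ_top (by omega), ih]
    push_cast
    ring

lemma aux12 (n : ℕ) :
    6 * ∑ k ∈ Finset.Icc 1 n, (k : ℚ) ^ 11 =
      (32 * ((n:ℚ) * (n + 1) / 2) ^ 4 - 64 * ((n:ℚ) * (n + 1) / 2) ^ 3 +
        68 * ((n:ℚ) * (n + 1) / 2) ^ 2 - 10 * (4 * ((n:ℚ) * (n + 1) / 2) - 1)) *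
        ∑ k ∈ Finset.Icc 1 n, (k : ℚ) ^ 3 := by
  induction n with
  | zero => simp
  | succ m ih =>
    rw [Finset.sum_Icc_succ_top (by omega), Finset.sum_Icc_succ_top (by omega),
      sum3 m] at *
    push_cast at ih ⊢
    linear_combination ih

theorem stmt_12 (n : ℕ) (hn : 0 < n) (T : ℚ) (hT : T = n * (n + 1) / 2) :
    6 * ∑ k ∈ Finset.Icc 1 n, (k : ℚ) ^ 11 =
      (32 * T ^ 4 - 64 * T ^ 3 + 68 * T ^ 2 - 10 * (4 * T - 1)) *
        ∑ k ∈ Finset.Icc 1 n, (k : ℚ) ^ 3 := by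
  subst hT; exact aux12 n
end

section
/- For every positive integer m, there exists a polynomial E with rational coefficients such that for all positive integers n, ∑_{k=1}^{n} k^{2m} = E(n(n+1)/2) · ∑_{k=1}^{n} k^2. -/
open Polynomial Finset

lemma aux_ex_poly (p : ℕ) : ∃ F : ℚ[X], ∀ n : ℕ, F.eval (n : ℚ) = ∑ k ∈ range n, (k : ℚ) ^ p := by
  refine ⟨∑ i ∈ range (p + 1), C (_root_.bernoulli i * ((p + 1).choose i) / (p + 1)) * X ^ (p + 1 - i), ?_⟩
  intro n
  rw [sum_range_pow]
  simp [eval_finset_sum, mul_comm, mul_div_assoc, div_mul_eq_mul_div]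

lemma aux_coeff_comp_neg (p : ℚ[X]) (k : ℕ) :
    (p.comp (-X)).coeff k = (-1) ^ k * p.coeff k := by
  induction p using Polynomial.induction_on' with
  | add p q hp hq => simp [add_comp, hp, hq, mul_add]
  | monomial n a =>
    have h1 : ((-1 : ℚ[X]) ^ n) = C ((-1 : ℚ) ^ n) := by simp
    rw [monomial_comp, neg_pow, h1, ← C_mul_X_pow_eq_monomial, ← mul_assoc, ← C_mul,
      coeff_C_mul, coeff_C_mul, coeff_X_pow]
    rcases eq_or_ne k n with rfl | h
    · simp [mul_comm]
    · simp [if_neg h]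

lemma aux_eq_of_nat (p q : ℚ[X]) (h : ∀ n : ℕ, p.eval (n : ℚ) = q.eval (n : ℚ)) : p = q := by
  rw [← sub_eq_zero]
  apply Polynomial.eq_zero_of_infinite_isRoot
  apply Set.Infinite.mono _
    (Set.infinite_of_injective_forall_mem (f := fun n : ℕ => (n : ℚ))
      Nat.cast_injective (s := {x : ℚ | ∃ n : ℕ, (n : ℚ) = x}) (fun n => ⟨n, rfl⟩))
  rintro x ⟨n, rfl⟩
  simp [IsRoot, h n]

lemma aux_sum_sq (n : ℕ) : ∑ k ∈ Finset.Icc 1 n, (k : ℚ) ^ 2 = n * (n + 1) * (2 * n + 1) / 6 := by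
  induction n with
  | zero => simp
  | succ n ih =>
    rw [Finset.sum_Icc_succ_top (Nat.le_add_left 1 n), ih]
    push_cast; ring

theorem stmt_13 (m : ℕ) (hm : 0 < m) :
    ∃ E : Polynomial ℚ, ∀ n : ℕ, 0 < n →
      ∑ k ∈ Finset.Icc 1 n, (k : ℚ) ^ (2 * m) =
        E.eval ((n : ℚ) * (n + 1) / 2) * ∑ k ∈ Finset.Icc 1 n, (k : ℚ) ^ 2 := by
  have h2m : 2 * m ≠ 0 := by omega
  obtain ⟨F0, hF0⟩ := aux_ex_poly (2 * m)
  set F : ℚ[X] := F0.comp (X + 1) with hFdef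
  have hFeval : ∀ n : ℕ, F.eval (n : ℚ) = ∑ k ∈ Finset.Icc 1 n, (k : ℚ) ^ (2 * m) := by
    intro n
    have hins : Finset.range (n + 1) = insert 0 (Finset.Icc 1 n) := by
      ext k; simp [Nat.lt_succ_iff]; omega
    have : ((n : ℚ) + 1) = ((n + 1 : ℕ) : ℚ) := by push_cast; ring
    rw [hFdef, eval_comp, eval_add, eval_X, eval_one, this, hF0, hins,
      Finset.sum_insert (by simp)]
    simp [zero_pow h2m]
  -- step identity as polynomials, then at all rationals
  have hstepP : F.comp (X + 1) - F = (X + 1) ^ (2 * m) := by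
    apply aux_eq_of_nat
    intro n
    have : ((n : ℚ) + 1) = ((n + 1 : ℕ) : ℚ) := by push_cast; ring
    rw [eval_sub, eval_comp, eval_add, eval_X, eval_one, this, hFeval, hFeval,
      Finset.sum_Icc_succ_top (Nat.le_add_left 1 n)]
    rw [eval_pow, eval_add, eval_X, eval_one]
    push_cast; ring
  have hstep : ∀ x : ℚ, F.eval (x + 1) - F.eval x = (x + 1) ^ (2 * m) := by
    intro x
    have := congrArg (eval x) hstepP
    simpa [eval_comp] using this
  have hF0z : F.eval 0 = 0 := by
    have := hFeval 0; simpa using this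
  have hFm1 : F.eval (-1) = 0 := by
    have := hstep (-1)
    simp [zero_pow h2m, hF0z] at this
    linarith
  -- oddness about -1/2
  have hoddP : F + F.comp (C (-1) - X) = 0 := by
    apply aux_eq_of_nat
    intro n
    suffices h : ∀ n : ℕ, F.eval (n : ℚ) + F.eval (-1 - (n : ℚ)) = 0 by
      simpa [eval_comp] using h n
    intro n
    induction n with
    | zero =>
      norm_num
      linarith [hF0z, hFm1]
    | succ n ih =>
      have h1 := hstep (n : ℚ)
      have h2 := hstep (-1 - ((n : ℚ) + 1))
      have e1 : (-1 - ((n : ℚ) + 1) + 1) = -1 - (n : ℚ) := by ring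
      rw [e1] at h2
      have e2 : (-1 - (n : ℚ)) ^ (2 * m) = ((n : ℚ) + 1) ^ (2 * m) := by
        rw [show (-1 - (n : ℚ)) = -((n : ℚ) + 1) by ring, Even.neg_pow ⟨m, by ring⟩]
      rw [e2] at h2
      push_cast
      linarith [h1, h2, ih]
  have hoddF : F.comp (C (-1) - X) = -F := by linear_combination hoddP
  set G : ℚ[X] := F.comp (X - C (1/2)) with hGdef
  have hc : (C ((1:ℚ)/2)) + C ((1:ℚ)/2) = 1 := by rw [← C_add]; norm_num
  have hGodd : G.comp (-X) = -G := by
    calc G.comp (-X) = F.comp ((X - C (1/2 : ℚ)).comp (-X)) := by rw [hGdef, comp_assoc]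
      _ = F.comp ((C (-1 : ℚ) - X).comp (X - C (1/2 : ℚ))) := by
          congr 1
          simp only [sub_comp, X_comp, C_comp, neg_comp, one_comp, C_neg, C_1]
          linear_combination -hc
      _ = (F.comp (C (-1 : ℚ) - X)).comp (X - C (1/2 : ℚ)) := by rw [← comp_assoc]
      _ = -G := by rw [hoddF, neg_comp, hGdef]
  -- even coefficients of G vanish
  have hGeven : ∀ k : ℕ, Even k → G.coeff k = 0 := by
    intro k hk
    have h1 := congrArg (fun p : ℚ[X] => p.coeff k) hGodd
    simp only [coeff_neg] at h1
    rw [aux_coeff_comp_neg, hk.neg_one_pow, one_mul] at h1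
    linarith
  set W : ℚ[X] := ∑ i ∈ range (G.natDegree + 1), C (G.coeff (2 * i + 1)) * X ^ i with hWdef
  have hWcoeff : ∀ i : ℕ, W.coeff i = if i < G.natDegree + 1 then G.coeff (2 * i + 1) else 0 := by
    intro i
    rw [hWdef, finset_sum_coeff]
    simp only [coeff_C_mul, coeff_X_pow, mul_ite, mul_one, mul_zero]
    rw [Finset.sum_ite_eq (range (G.natDegree + 1)) i (fun j => G.coeff (2 * j + 1))]
    simp [Finset.mem_range]
  have hGW : G = X * expand ℚ 2 W := by
    ext k
    match k with
    | 0 =>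
      rw [mul_coeff_zero, coeff_X_zero, zero_mul, hGeven 0 (Even.zero)]
    | k + 1 =>
      rw [coeff_X_mul, coeff_expand (by norm_num : 0 < 2)]
      rcases Nat.even_or_odd k with he | ho
      · obtain ⟨i, rfl⟩ := he
        rw [if_pos ⟨i, by ring⟩]
        have : (i + i) / 2 = i := by omega
        rw [this, hWcoeff]
        split
        · congr 1; omega
        · rename_i hgt
          rw [coeff_eq_zero_of_natDegree_lt]
          omega
      · obtain ⟨j, rfl⟩ := ho
        rw [if_neg (by omega : ¬ 2 ∣ (2 * j + 1))]
        exact hGeven (2 * j + 1 + 1) ⟨j + 1, by ring⟩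
  -- W has root 1/4
  have hGF : ∀ x : ℚ, G.eval x = F.eval (x - 1/2) := by
    intro x; rw [hGdef, eval_comp]; simp
  have hW14 : W.IsRoot (1/4 : ℚ) := by
    have h1 : G.eval (1/2 : ℚ) = 0 := by rw [hGF]; norm_num [hF0z]
    rw [hGW] at h1
    simp only [eval_mul, eval_X, expand_eval] at h1
    have : ((1:ℚ)/2) ^ 2 = 1/4 := by norm_num
    rw [this] at h1
    unfold IsRoot
    rcases mul_eq_zero.mp h1 with h | h
    · norm_num at h
    · exact h
  obtain ⟨V, hV⟩ := (dvd_iff_isRoot.mpr hW14)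
  refine ⟨C 3 * V.comp (C 2 * X + C (1/4)), ?_⟩
  intro n hn
  have key : ∀ x : ℚ, F.eval x = (x + 1/2) * ((x + 1/2) ^ 2 - 1/4) * V.eval ((x + 1/2) ^ 2) := by
    intro x
    have h1 : F.eval x = G.eval (x + 1/2) := by rw [hGF]; ring_nf
    rw [h1, hGW]
    simp only [eval_mul, eval_X, expand_eval, hV, eval_mul, eval_sub, eval_C, eval_X]
    ring
  rw [← hFeval n, key, aux_sum_sq]
  simp only [eval_mul, eval_C, eval_comp, eval_add, eval_mul, eval_X]
  have harg : (2 * ((n : ℚ) * ((n:ℚ) + 1) / 2) + 1/4) = ((n : ℚ) + 1/2) ^ 2 := by ring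
  rw [harg]
  ring
end
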